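/- Let k, k1, k2, k3 ∈ ℤ with k2 + k3 - k1 = k, |k2| ≥ |k3|, and suppose |k3| ≥ 2^{-20}|k| (the high-high region 𝕏_H) or 2^{-10}|k1| ≤ |k3| < 2^{-20}|k| (the semilinear region 𝕏_S). Then |k1|·(⟨k1⟩⟨k2⟩⟨k3⟩)^{-1/2} ≲ ⟨k⟩^{-1/2} with an absolute implicit constant. -/
import Mathlib


/-- The Japanese bracket `⟨k⟩ = √(1 + k²)` of an integer. -/
noncomputable def jb (k : ℤ) : ℝ := Real.sqrt (1 + (k : ℝ) ^ 2)

lemma jb_pos (k : ℤ) : 0 < jb k := by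
  have : (0:ℝ) < 1 + (k:ℝ)^2 := by positivity
  exact Real.sqrt_pos.mpr this

lemma abs_le_jb (k : ℤ) : |(k:ℝ)| ≤ jb k := by
  have h : |(k:ℝ)| = Real.sqrt ((k:ℝ)^2) := by
    rw [Real.sqrt_sq_eq_abs]
  rw [h]
  exact Real.sqrt_le_sqrt (by nlinarith)

lemma jb_le_of_abs_le {a b : ℤ} {M : ℝ} (hM : 1 ≤ M) (h : |(a:ℝ)| ≤ M * |(b:ℝ)|) :
    jb a ≤ M * jb b := by
  have h1 : (1:ℝ) + (a:ℝ)^2 ≤ M^2 * (1 + (b:ℝ)^2) := by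
    have ha : (a:ℝ)^2 = |(a:ℝ)|^2 := (sq_abs _).symm
    have hb : (b:ℝ)^2 = |(b:ℝ)|^2 := (sq_abs _).symm
    have h2 : |(a:ℝ)|^2 ≤ (M * |(b:ℝ)|)^2 := by
      apply pow_le_pow_left₀ (abs_nonneg _) h
    nlinarith [abs_nonneg (a:ℝ), abs_nonneg (b:ℝ)]
  have := Real.sqrt_le_sqrt h1
  calc jb a ≤ Real.sqrt (M^2 * (1 + (b:ℝ)^2)) := this
    _ = M * jb b := by
        rw [Real.sqrt_mul (by positivity), Real.sqrt_sq (by linarith)]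
        rfl

theorem stmt9 :
    ∃ C : ℝ, 0 < C ∧ ∀ k k1 k2 k3 : ℤ, k2 + k3 - k1 = k → |k3| ≤ |k2| →
      ((|k| ≤ 2 ^ 20 * |k3|) ∨ (|k1| ≤ 2 ^ 10 * |k3| ∧ 2 ^ 20 * |k3| < |k|)) →
      ((|k1| : ℤ) : ℝ) * (jb k1 * jb k2 * jb k3) ^ (-(1/2) : ℝ) ≤
        C * (jb k) ^ (-(1/2) : ℝ) := by
  refine ⟨2^21, by positivity, ?_⟩
  intro k k1 k2 k3 hsum h23 hreg
  -- cast hypotheses to ℝ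
  have h23R : |(k3:ℝ)| ≤ |(k2:ℝ)| := by exact_mod_cast h23
  -- key inequality : jb k1 * jb k ≤ 2^42 * (jb k2 * jb k3)
  have key : jb k1 * jb k ≤ 2^42 * (jb k2 * jb k3) := by
    rcases hreg with hH | ⟨hS1, hS2⟩
    · -- high-high: |k| ≤ 2^20 |k3|, so jb k ≤ 2^20 jb k3; |k1| ≤ (2+2^20)|k2|
      have hkR : |(k:ℝ)| ≤ 2^20 * |(k3:ℝ)| := by exact_mod_cast hH
      have hk1R : |(k1:ℝ)| ≤ 2^21 * |(k2:ℝ)| := by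
        have : (k1:ℝ) = (k2:ℝ) + (k3:ℝ) - (k:ℝ) := by
          have := hsum; push_cast [← this]; ring
        rw [this]
        have hkb : |(k:ℝ)| ≤ 2^20 * |(k2:ℝ)| := hkR.trans (by gcongr)
        have htri : |(k2:ℝ) + (k3:ℝ) - (k:ℝ)| ≤ |(k2:ℝ)| + |(k3:ℝ)| + |(k:ℝ)| :=
          (abs_sub _ _).trans (by gcongr; exact abs_add_le _ _)
        nlinarith [abs_nonneg (k2:ℝ)]
      have b1 : jb k1 ≤ 2^21 * jb k2 := jb_le_of_abs_le (by norm_num) hk1R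
      have b2 : jb k ≤ 2^20 * jb k3 := jb_le_of_abs_le (by norm_num) hkR
      nlinarith [jb_pos k1, jb_pos k2, jb_pos k3, jb_pos k]
    · -- semilinear : |k1| ≤ 2^10 |k3|, and |k| ≤ (2+2^10)|k2|
      have hk1R : |(k1:ℝ)| ≤ 2^10 * |(k3:ℝ)| := by exact_mod_cast hS1
      have hkR : |(k:ℝ)| ≤ 2^11 * |(k2:ℝ)| := by
        have hkk : (k:ℝ) = (k2:ℝ) + (k3:ℝ) - (k1:ℝ) := by push_cast [← hsum]; ring
        rw [hkk]
        have hk1b : |(k1:ℝ)| ≤ 2^10 * |(k2:ℝ)| := hk1R.trans (by gcongr)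
        have htri : |(k2:ℝ) + (k3:ℝ) - (k1:ℝ)| ≤ |(k2:ℝ)| + |(k3:ℝ)| + |(k1:ℝ)| :=
          (abs_sub _ _).trans (by gcongr; exact abs_add_le _ _)
        nlinarith [abs_nonneg (k2:ℝ)]
      have b1 : jb k1 ≤ 2^10 * jb k3 := jb_le_of_abs_le (by norm_num) hk1R
      have b2 : jb k ≤ 2^11 * jb k2 := jb_le_of_abs_le (by norm_num) hkR
      nlinarith [jb_pos k1, jb_pos k2, jb_pos k3, jb_pos k]
  -- now turn rpow into sqrt inverses
  set P : ℝ := jb k1 * jb k2 * jb k3 with hP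
  have hPpos : 0 < P := mul_pos (mul_pos (jb_pos k1) (jb_pos k2)) (jb_pos k3)
  have hQpos : 0 < jb k := jb_pos k
  have rP : P ^ (-(1/2) : ℝ) = (Real.sqrt P)⁻¹ := by
    rw [Real.rpow_neg hPpos.le, Real.sqrt_eq_rpow]
  have rQ : (jb k) ^ (-(1/2) : ℝ) = (Real.sqrt (jb k))⁻¹ := by
    rw [Real.rpow_neg hQpos.le, Real.sqrt_eq_rpow]
  rw [rP, rQ]
  have hsP : 0 < Real.sqrt P := Real.sqrt_pos.mpr hPpos
  have hsQ : 0 < Real.sqrt (jb k) := Real.sqrt_pos.mpr hQpos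
  rw [← div_eq_mul_inv, ← div_eq_mul_inv, div_le_div_iff₀ hsP hsQ]
  -- goal: ↑|k1| * √(jb k) ≤ 2^21 * √P
  have hcast : ((|k1| : ℤ) : ℝ) = |((k1:ℤ):ℝ)| := by push_cast; rfl
  rw [hcast]
  have h1 : (|((k1:ℤ):ℝ)| * Real.sqrt (jb k))^2 ≤ ((2:ℝ)^21 * Real.sqrt P)^2 := by
    have e1 : Real.sqrt (jb k) ^ 2 = jb k := Real.sq_sqrt hQpos.le
    have e2 : Real.sqrt P ^ 2 = P := Real.sq_sqrt hPpos.le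
    have h2 : |((k1:ℤ):ℝ)| ≤ jb k1 := abs_le_jb k1
    have h3 : jb k1 * (jb k1 * jb k) ≤ jb k1 * (2^42 * (jb k2 * jb k3)) :=
      mul_le_mul_of_nonneg_left key (jb_pos k1).le
    nlinarith [jb_pos k1, jb_pos k2, jb_pos k3, hQpos, abs_nonneg ((k1:ℤ):ℝ),
      mul_le_mul_of_nonneg_right (mul_le_mul h2 h2 (abs_nonneg _) (jb_pos k1).le) hQpos.le]
  have h4 := Real.sqrt_le_sqrt h1
  rwa [Real.sqrt_sq (by positivity), Real.sqrt_sq (by positivity)] at h4
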